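/- Let d, n be natural numbers. Let m, h ∈ ℝ^d, let K be a d × d real matrix with ‖K‖_op ≤ ρ, G and P be d × n real matrices, g ∈ ℝ^n, and Δx ∈ ℝ^n with l_s := ‖Δx‖ > 0. Define f := G g + h, the static MeanFlow residual r_MF := −l_s • (K f), and the spatial residual matrix R_S := l_s • (K G) − m Δxᵀ + l_s² • P. Then ‖r_MF‖ ≤ ‖g‖ ‖R_S‖_op + l_s ‖m‖ ‖g‖ + l_s² ‖P‖_op ‖g‖ + l_s ρ ‖h‖. -/

import Mathlib

/-- Steady-state (γ = 0) case of the space-time decoupling analysis: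
the static MeanFlow residual is controlled by the spatial MeanFlow residual up to
terms of order `l_s`. Matrices are represented as continuous linear maps between
Euclidean spaces (with the induced operator norm); the outer product `m Δxᵀ` is
`(innerSL ℝ Δx).smulRight m`. -/
theorem stmt_11 (d n : ℕ)
    (m h : EuclideanSpace ℝ (Fin d))
    (K : EuclideanSpace ℝ (Fin d) →L[ℝ] EuclideanSpace ℝ (Fin d))
    (ρ : ℝ) (hK : ‖K‖ ≤ ρ)
    (G P : EuclideanSpace ℝ (Fin n) →L[ℝ] EuclideanSpace ℝ (Fin d))
    (g Δx : EuclideanSpace ℝ (Fin n))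
    (ls : ℝ) (hls : ls = ‖Δx‖) (hlspos : 0 < ls)
    (f : EuclideanSpace ℝ (Fin d)) (hf : f = G g + h)
    (rMF : EuclideanSpace ℝ (Fin d))
    (hrMF : rMF = -(ls • K f))
    (RS : EuclideanSpace ℝ (Fin n) →L[ℝ] EuclideanSpace ℝ (Fin d))
    (hRS : RS = ls • K.comp G - (innerSL ℝ Δx).smulRight m + ls ^ 2 • P) :
    ‖rMF‖ ≤ ‖g‖ * ‖RS‖ + ls * ‖m‖ * ‖g‖ + ls ^ 2 * ‖P‖ * ‖g‖ + ls * ρ * ‖h‖ := by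
  have key : ls • K f
      = RS g + ((inner ℝ Δx g : ℝ) • m - ls ^ 2 • P g) + ls • K h := by
    subst hf hRS
    simp [ContinuousLinearMap.add_apply, ContinuousLinearMap.sub_apply,
      ContinuousLinearMap.smul_apply, ContinuousLinearMap.smulRight_apply,
      map_add, smul_add]

  have h1 : ‖rMF‖ ≤ ‖RS g‖ + (‖(inner ℝ Δx g : ℝ) • m‖ + ‖ls ^ 2 • P g‖) + ‖ls • K h‖ := by
    rw [hrMF, norm_neg, key]
    calc ‖RS g + ((inner ℝ Δx g : ℝ) • m - ls ^ 2 • P g) + ls • K h‖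
        ≤ ‖RS g + ((inner ℝ Δx g : ℝ) • m - ls ^ 2 • P g)‖ + ‖ls • K h‖ := norm_add_le _ _
      _ ≤ ‖RS g‖ + ‖(inner ℝ Δx g : ℝ) • m - ls ^ 2 • P g‖ + ‖ls • K h‖ := by
          gcongr; exact norm_add_le _ _
      _ ≤ ‖RS g‖ + (‖(inner ℝ Δx g : ℝ) • m‖ + ‖ls ^ 2 • P g‖) + ‖ls • K h‖ := by
          gcongr; exact norm_sub_le _ _
  refine h1.trans ?_
  have e1 : ‖RS g‖ ≤ ‖g‖ * ‖RS‖ := by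
    rw [mul_comm]; exact RS.le_opNorm g
  have e2 : ‖(inner ℝ Δx g : ℝ) • m‖ ≤ ls * ‖m‖ * ‖g‖ := by
    rw [norm_smul]
    calc ‖(inner ℝ Δx g : ℝ)‖ * ‖m‖ ≤ ‖Δx‖ * ‖g‖ * ‖m‖ := by
          gcongr; exact norm_inner_le_norm Δx g
      _ = ls * ‖m‖ * ‖g‖ := by rw [hls]; ring
  have e3 : ‖ls ^ 2 • P g‖ ≤ ls ^ 2 * ‖P‖ * ‖g‖ := by
    rw [norm_smul, mul_assoc, Real.norm_eq_abs, abs_of_nonneg (by positivity)]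
    gcongr
    exact P.le_opNorm g
  have e4 : ‖ls • K h‖ ≤ ls * ρ * ‖h‖ := by
    rw [norm_smul, Real.norm_eq_abs, abs_of_pos hlspos, mul_assoc]
    gcongr
    exact (K.le_opNorm h).trans (by gcongr)
  linarith
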